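/- Let G be a finite subgroup of GL(V) with dim V^G = 2, let f be a nonzero homogeneous G-invariant polynomial function on V, and let v ∈ V^G be a nonzero vector with f(v) = 0. Assume that v is a smooth point of the hypersurface Z(f), i.e. some partial derivative of f is nonzero at v. Then the line ℙ(V^G) meets Z(f) transversally at [v]: there exists u ∈ V^G with ∂_u f(v) ≠ 0. -/

import Mathlib

noncomputable section
open MvPolynomial Matrix

/-- The subspace of vectors fixed by every element of a set of invertible matrices. -/
def fixedSpace {n : ℕ} (S : Set (GL (Fin n) ℂ)) : Submodule ℂ (Fin n → ℂ) where
  carrier := {v | ∀ g ∈ S, (g : Matrix (Fin n) (Fin n) ℂ).mulVec v = v}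
  add_mem' := by
    intro a b ha hb g hg
    rw [Matrix.mulVec_add, ha g hg, hb g hg]
  zero_mem' := by
    intro g hg
    simp
  smul_mem' := by
    intro c a ha g hg
    rw [Matrix.mulVec_smul, ha g hg]

variable {n : ℕ}

lemma aux_eval (v w : Fin n → ℂ) (t : ℂ) (f : MvPolynomial (Fin n) ℂ) :
    Polynomial.eval t (MvPolynomial.aeval
      (fun i => Polynomial.C (v i) + Polynomial.C (w i) * Polynomial.X) f)
      = MvPolynomial.eval (fun i => v i + t * w i) f := by
  induction f using MvPolynomial.induction_on with
  | C a => simp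
  | add p q hp hq => simp [hp, hq]
  | mul_X p j hp =>
    rw [_root_.map_mul, MvPolynomial.aeval_X, Polynomial.eval_mul, hp,
      MvPolynomial.eval_mul, MvPolynomial.eval_X]
    simp
    exact Or.inl (mul_comm _ _)

lemma aux_coeff (v w : Fin n → ℂ) (f : MvPolynomial (Fin n) ℂ) :
    (MvPolynomial.aeval
      (fun i => Polynomial.C (v i) + Polynomial.C (w i) * Polynomial.X) f).coeff 1
      = ∑ i, w i * MvPolynomial.eval v (pderiv i f) := by
  induction f using MvPolynomial.induction_on with
  | C a => simp
  | add p q hp hq => simp [hp, hq, Finset.sum_add_distrib, mul_add]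
  | mul_X p j hp =>
    rw [_root_.map_mul, MvPolynomial.aeval_X, mul_add, Polynomial.coeff_add,
      Polynomial.coeff_mul_C, ← mul_assoc, show (1:ℕ) = 0 + 1 from rfl,
      Polynomial.coeff_mul_X, Polynomial.coeff_mul_C, hp]
    have h0 : (MvPolynomial.aeval
        (fun i => Polynomial.C (v i) + Polynomial.C (w i) * Polynomial.X) p).coeff 0
        = MvPolynomial.eval v p := by
      have := aux_eval v w 0 p
      simp only [Polynomial.coeff_zero_eq_eval_zero] at this ⊢
      rw [this]
      have hv : (fun i => v i + 0 * w i) = v := by funext i; ring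
      rw [hv]
    rw [h0]
    have : ∀ i, w i * MvPolynomial.eval v (pderiv i (p * X j))
        = w i * MvPolynomial.eval v (pderiv i p) * v j
          + w i * MvPolynomial.eval v p * (if j = i then 1 else 0) := by
      intro i
      rcases eq_or_ne j i with h | h
      · subst h; simp [pderiv_mul]; ring
      · simp [pderiv_mul, h]; ring
    rw [Finset.sum_congr rfl fun i _ => this i, Finset.sum_add_distrib,
      ← Finset.sum_mul]
    simp only [mul_ite, mul_one, mul_zero, Finset.sum_ite_eq, Finset.mem_univ, if_true]
    ring


theorem stmt_5 {n e : ℕ} (G : Subgroup (GL (Fin n) ℂ)) (hG : Finite G)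
    (hdim : Module.finrank ℂ (fixedSpace (G : Set (GL (Fin n) ℂ))) = 2)
    (f : MvPolynomial (Fin n) ℂ) (hf0 : f ≠ 0) (hhom : f.IsHomogeneous e)
    (hinv : ∀ g ∈ G, ∀ w : Fin n → ℂ,
      MvPolynomial.eval ((g : Matrix (Fin n) (Fin n) ℂ).mulVec w) f = MvPolynomial.eval w f)
    (v : Fin n → ℂ) (hv : v ∈ fixedSpace (G : Set (GL (Fin n) ℂ))) (hv0 : v ≠ 0)
    (hfv : MvPolynomial.eval v f = 0)
    (hsmooth : ∃ i, MvPolynomial.eval v (pderiv i f) ≠ 0) :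
    ∃ u ∈ fixedSpace (G : Set (GL (Fin n) ℂ)),
      ∑ i, u i * MvPolynomial.eval v (pderiv i f) ≠ 0 := by
  classical
  obtain ⟨i0, hi0⟩ := hsmooth
  set c : Fin n → ℂ := fun i => MvPolynomial.eval v (pderiv i f) with hc
  -- invariance of the directional derivative functional
  have key : ∀ M : Matrix (Fin n) (Fin n) ℂ, M.mulVec v = v →
      (∀ x, MvPolynomial.eval (M.mulVec x) f = MvPolynomial.eval x f) →
      ∀ w : Fin n → ℂ, ∑ i, (M.mulVec w) i * c i = ∑ i, w i * c i := by
    intro M hMv hMf w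
    rw [hc, ← aux_coeff v (M.mulVec w) f, ← aux_coeff v w f]
    refine congrArg (fun p : Polynomial ℂ => p.coeff 1) ?_
    apply Polynomial.funext
    intro t
    rw [aux_eval, aux_eval]
    have h1 : (fun i => v i + t * M.mulVec w i) = M.mulVec (v + t • w) := by
      rw [Matrix.mulVec_add, Matrix.mulVec_smul, hMv]
      funext i; simp
    have h2 : (fun i => v i + t * w i) = v + t • w := by funext i; simp
    rw [h1, h2, hMf]
  haveI : Fintype G := Fintype.ofFinite G
  set w : Fin n → ℂ := Pi.single i0 1 with hw
  have hLw : ∑ i, w i * c i = c i0 := by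
    simp [hw, Pi.single_apply, ite_mul, Finset.sum_ite_eq']
  set s : ℂ := (Fintype.card G : ℂ)⁻¹ with hs
  set u : Fin n → ℂ :=
    s • ∑ g : G, ((g : GL (Fin n) ℂ) : Matrix (Fin n) (Fin n) ℂ).mulVec w with hu
  have hcard : (Fintype.card G : ℂ) ≠ 0 := by
    exact_mod_cast Nat.cast_ne_zero.mpr Fintype.card_ne_zero
  refine ⟨u, ?_, ?_⟩
  · intro M hM
    have hsum : (M : Matrix (Fin n) (Fin n) ℂ).mulVec
        (∑ g : G, ((g : GL (Fin n) ℂ) : Matrix (Fin n) (Fin n) ℂ).mulVec w)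
        = ∑ g : G, ((M : Matrix (Fin n) (Fin n) ℂ)
            * ((g : GL (Fin n) ℂ) : Matrix (Fin n) (Fin n) ℂ)).mulVec w := by
      rw [← Matrix.mulVecLin_apply, map_sum]
      refine Finset.sum_congr rfl fun g _ => ?_
      rw [Matrix.mulVecLin_apply, Matrix.mulVec_mulVec]
    rw [hu, Matrix.mulVec_smul, hsum]
    congr 1
    set m : G := ⟨M, hM⟩ with hm
    calc ∑ g : G, ((M : Matrix (Fin n) (Fin n) ℂ)
            * ((g : GL (Fin n) ℂ) : Matrix (Fin n) (Fin n) ℂ)).mulVec w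
        = ∑ g : G, (((m * g : G) : GL (Fin n) ℂ) : Matrix (Fin n) (Fin n) ℂ).mulVec w := by
          refine Finset.sum_congr rfl fun g _ => ?_
          congr 1
      _ = ∑ g : G, ((g : GL (Fin n) ℂ) : Matrix (Fin n) (Fin n) ℂ).mulVec w :=
          Fintype.sum_equiv (Equiv.mulLeft m)
            (fun g => (((m * g : G) : GL (Fin n) ℂ) : Matrix (Fin n) (Fin n) ℂ).mulVec w)
            (fun g => ((g : GL (Fin n) ℂ) : Matrix (Fin n) (Fin n) ℂ).mulVec w)
            (fun g => rfl)
  · have hcomp : ∑ i, u i * c i = c i0 := by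
      rw [hu]
      simp only [Pi.smul_apply, Finset.sum_apply, smul_eq_mul]
      calc ∑ i, s * (∑ g : G, ((g : GL (Fin n) ℂ) : Matrix (Fin n) (Fin n) ℂ).mulVec w i) * c i
          = s * ∑ g : G, ∑ i, (((g : GL (Fin n) ℂ) : Matrix (Fin n) (Fin n) ℂ).mulVec w) i * c i := by
            simp_rw [mul_assoc, Finset.sum_mul, Finset.mul_sum]
            exact Finset.sum_comm
        _ = s * ∑ g : G, c i0 := by
            congr 1
            refine Finset.sum_congr rfl fun g _ => ?_
            rw [key _ (hv _ g.2) (hinv _ g.2) w, hLw]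
        _ = c i0 := by
            rw [Finset.sum_const, Finset.card_univ, nsmul_eq_mul, hs, ← mul_assoc,
              inv_mul_cancel₀ hcard, one_mul]
    rw [hcomp]
    exact hi0
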